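/- arXiv:1902.09740 — 5 statements merged into one kernel-verified Lean document; each statement's English description precedes it below -/
import Mathlib

section
/- Fix k > 0, α > 0, and grid functions p and m̂. Then there exists exactly one grid function m̃ satisfying, at every grid point, ( (3/2)·m̃ − p )/k = − m̂ × (Δ_h m̃) − α · m̂ × ( m̂ × (Δ_h m̃) ). In other words, the linear map m̃ ↦ (3/(2k))·m̃ + m̂ × (Δ_h m̃) + α · m̂ × ( m̂ × (Δ_h m̃) ) from grid functions to grid functions is bijective. -/
noncomputable section

open Finset

/-- Euclidean dot product on ℝ³. -/
def dot3 (a b : Fin 3 → ℝ) : ℝ := ∑ j, a j * b j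

/-- Euclidean norm on ℝ³. -/
def norm3 (a : Fin 3 → ℝ) : ℝ := Real.sqrt (dot3 a a)

/-- Cross product on ℝ³. -/
def cross3 (a b : Fin 3 → ℝ) : Fin 3 → ℝ :=
  ![a 1 * b 2 - a 2 * b 1, a 2 * b 0 - a 0 * b 2, a 0 * b 1 - a 1 * b 0]

/-- Mesh size `h = 1/N` of the uniform 1-D grid with `N` cells. -/
def gridh (N : ℕ) : ℝ := 1 / N

/-- Neumann discrete Laplacian on grid functions `{1,…,N} → ℝ³`. -/
def glap (N : ℕ) (f : ℕ → Fin 3 → ℝ) : ℕ → Fin 3 → ℝ := fun i =>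
  if i = 1 then ((gridh N) ^ 2)⁻¹ • (f 2 - f 1)
  else if i = N then ((gridh N) ^ 2)⁻¹ • (f (N - 1) - f N)
  else ((gridh N) ^ 2)⁻¹ • (f (i + 1) - (2 : ℝ) • f i + f (i - 1))

/-- Discrete gradient `(∇_h f)_i = (f_{i+1} − f_i)/h`. -/
def ggrad (N : ℕ) (f : ℕ → Fin 3 → ℝ) : ℕ → Fin 3 → ℝ := fun i =>
  (gridh N)⁻¹ • (f (i + 1) - f i)

/-- Discrete inner product `⟨f,g⟩ = h ∑_{i=1}^N f_i · g_i`. -/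
def gip (N : ℕ) (f g : ℕ → Fin 3 → ℝ) : ℝ :=
  gridh N * ∑ i ∈ Finset.Icc 1 N, dot3 (f i) (g i)

/-- Discrete `‖·‖₂` norm. -/
def gnorm2 (N : ℕ) (f : ℕ → Fin 3 → ℝ) : ℝ := Real.sqrt (gip N f f)

/-- Discrete inner product of gradients `⟨∇_h f, ∇_h g⟩ = h ∑_{i=1}^{N−1} (∇_h f)_i · (∇_h g)_i`. -/
def gipGrad (N : ℕ) (f g : ℕ → Fin 3 → ℝ) : ℝ :=
  gridh N * ∑ i ∈ Finset.Icc 1 (N - 1), dot3 (ggrad N f i) (ggrad N g i)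

/-- Discrete `‖∇_h ·‖₂` norm. -/
def gnormGrad (N : ℕ) (f : ℕ → Fin 3 → ℝ) : ℝ := Real.sqrt (gipGrad N f f)

/-- Discrete `‖·‖_∞` norm. -/
def gsup (N : ℕ) (f : ℕ → Fin 3 → ℝ) : ℝ := ⨆ i ∈ Finset.Icc 1 N, norm3 (f i)

/-- Discrete `‖∇_h ·‖_∞` norm. -/
def gsupGrad (N : ℕ) (f : ℕ → Fin 3 → ℝ) : ℝ :=
  ⨆ i ∈ Finset.Icc 1 (N - 1), norm3 (ggrad N f i)

/-! ### Auxiliary lemmas -/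

lemma dot3_expand (a b : Fin 3 → ℝ) : dot3 a b = a 0 * b 0 + a 1 * b 1 + a 2 * b 2 := by
  simp [dot3, Fin.sum_univ_three]

lemma cross3_c0 (a b : Fin 3 → ℝ) : cross3 a b 0 = a 1 * b 2 - a 2 * b 1 := rfl
lemma cross3_c1 (a b : Fin 3 → ℝ) : cross3 a b 1 = a 2 * b 0 - a 0 * b 2 := rfl
lemma cross3_c2 (a b : Fin 3 → ℝ) : cross3 a b 2 = a 0 * b 1 - a 1 * b 0 := rfl

lemma dot3_smul_right (r : ℝ) (a b : Fin 3 → ℝ) : dot3 a (r • b) = r * dot3 a b := by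
  simp [dot3_expand]; ring

lemma dot3_self_nonneg (a : Fin 3 → ℝ) : 0 ≤ dot3 a a := by
  rw [dot3_expand]
  nlinarith [mul_self_nonneg (a 0), mul_self_nonneg (a 1), mul_self_nonneg (a 2)]

lemma dot3_self_eq_zero {a : Fin 3 → ℝ} (h : dot3 a a = 0) : a = 0 := by
  rw [dot3_expand] at h
  have h0 : a 0 = 0 := by
    nlinarith [mul_self_nonneg (a 0), mul_self_nonneg (a 1), mul_self_nonneg (a 2)]
  have h1 : a 1 = 0 := by
    nlinarith [mul_self_nonneg (a 0), mul_self_nonneg (a 1), mul_self_nonneg (a 2)]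
  have h2 : a 2 = 0 := by
    nlinarith [mul_self_nonneg (a 0), mul_self_nonneg (a 1), mul_self_nonneg (a 2)]
  funext j
  fin_cases j
  · simpa using h0
  · simpa using h1
  · simpa using h2

lemma cross3_zero_right (a : Fin 3 → ℝ) : cross3 a 0 = 0 := by
  funext j; fin_cases j <;> simp [cross3]

lemma cross3_add_right (a b c : Fin 3 → ℝ) : cross3 a (b + c) = cross3 a b + cross3 a c := by
  funext j; fin_cases j <;> (simp [cross3]; ring)

lemma cross3_sub_right (a b c : Fin 3 → ℝ) : cross3 a (b - c) = cross3 a b - cross3 a c := by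
  funext j; fin_cases j <;> (simp [cross3]; ring)

lemma cross3_smul_right (a : Fin 3 → ℝ) (r : ℝ) (b : Fin 3 → ℝ) :
    cross3 a (r • b) = r • cross3 a b := by
  funext j; fin_cases j <;> (simp [cross3]; ring)

lemma dot3_cross_self (a b : Fin 3 → ℝ) : dot3 (cross3 a b) b = 0 := by
  simp [dot3_expand, cross3_c0, cross3_c1, cross3_c2]; ring

lemma dot3_double_cross (a b : Fin 3 → ℝ) :
    dot3 (cross3 a (cross3 a b)) b = -dot3 (cross3 a b) (cross3 a b) := by
  simp [dot3_expand, cross3_c0, cross3_c1, cross3_c2]; ring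

lemma dot3_add_left (a b c : Fin 3 → ℝ) : dot3 (a + b) c = dot3 a c + dot3 b c := by
  simp [dot3_expand]; ring

lemma dot3_smul_left (r : ℝ) (a b : Fin 3 → ℝ) : dot3 (r • a) b = r * dot3 a b := by
  simp [dot3_expand]; ring

lemma dot3_zero_left (b : Fin 3 → ℝ) : dot3 0 b = 0 := by
  simp [dot3_expand]

/-! ### Summation by parts -/

def Dop (n : ℕ) (m : ℕ → Fin 3 → ℝ) (i : ℕ) : Fin 3 → ℝ :=
  if i = 1 then m 2 - m 1
  else if i = n then m (n - 1) - m n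
  else m (i + 1) - (2 : ℝ) • m i + m (i - 1)

lemma glap_eq_Dop (N : ℕ) (m : ℕ → Fin 3 → ℝ) (i : ℕ) :
    glap N m i = ((gridh N) ^ 2)⁻¹ • Dop N m i := by
  unfold glap Dop; split_ifs <;> rfl

lemma sbp (m : ℕ → Fin 3 → ℝ) : ∀ n, 2 ≤ n →
    ∑ i ∈ Icc 1 n, dot3 (m i) (Dop n m i)
      = -∑ i ∈ Icc 1 (n - 1), dot3 (m (i + 1) - m i) (m (i + 1) - m i) := by
  intro n hn
  induction n, hn using Nat.le_induction with
  | base =>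
    have e : Finset.Icc 1 2 = {1, 2} := rfl
    have e1 : Finset.Icc 1 1 = {1} := rfl
    rw [e, e1, Finset.sum_insert (by decide), Finset.sum_singleton, Finset.sum_singleton]
    have d1 : Dop 2 m 1 = m 2 - m 1 := by simp [Dop]
    have d2 : Dop 2 m 2 = m 1 - m 2 := by simp [Dop]
    rw [d1, d2]
    simp [dot3_expand]; ring
  | succ n hn ih =>
    obtain ⟨j, rfl⟩ : ∃ j, n = j + 2 := ⟨n - 2, by omega⟩
    have peel1 : ∑ i ∈ Icc 1 (j + 2 + 1), dot3 (m i) (Dop (j + 3) m i)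
        = ∑ i ∈ Icc 1 (j + 2), dot3 (m i) (Dop (j + 3) m i)
          + dot3 (m (j + 3)) (Dop (j + 3) m (j + 3)) :=
      Finset.sum_Icc_succ_top (by omega) _
    have peel2 : ∑ i ∈ Icc 1 (j + 2), dot3 (m i) (Dop (j + 3) m i)
        = ∑ i ∈ Icc 1 (j + 1), dot3 (m i) (Dop (j + 3) m i)
          + dot3 (m (j + 2)) (Dop (j + 3) m (j + 2)) :=
      Finset.sum_Icc_succ_top (by omega) _
    have peel3 : ∑ i ∈ Icc 1 (j + 2), dot3 (m i) (Dop (j + 2) m i)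
        = ∑ i ∈ Icc 1 (j + 1), dot3 (m i) (Dop (j + 2) m i)
          + dot3 (m (j + 2)) (Dop (j + 2) m (j + 2)) :=
      Finset.sum_Icc_succ_top (by omega) _
    have congr1 : ∑ i ∈ Icc 1 (j + 1), dot3 (m i) (Dop (j + 3) m i)
        = ∑ i ∈ Icc 1 (j + 1), dot3 (m i) (Dop (j + 2) m i) := by
      refine Finset.sum_congr rfl fun i hi => ?_
      simp only [mem_Icc] at hi
      unfold Dop
      rcases eq_or_ne i 1 with h | h
      · simp [h]
      · rw [if_neg h, if_neg (by omega), if_neg h, if_neg (by omega)]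
    have peelR : ∑ i ∈ Icc 1 (j + 2 + 1 - 1), dot3 (m (i + 1) - m i) (m (i + 1) - m i)
        = ∑ i ∈ Icc 1 (j + 1), dot3 (m (i + 1) - m i) (m (i + 1) - m i)
          + dot3 (m (j + 3) - m (j + 2)) (m (j + 3) - m (j + 2)) := by
      have h : j + 2 + 1 - 1 = (j + 1) + 1 := by omega
      rw [h, Finset.sum_Icc_succ_top (by omega)]
    have d1 : Dop (j + 3) m (j + 2) = m (j + 3) - (2 : ℝ) • m (j + 2) + m (j + 1) := by
      unfold Dop; rw [if_neg (by omega), if_neg (by omega)]; norm_num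
    have d2 : Dop (j + 3) m (j + 3) = m (j + 2) - m (j + 3) := by
      unfold Dop; rw [if_neg (by omega), if_pos rfl]; norm_num
    have d3 : Dop (j + 2) m (j + 2) = m (j + 1) - m (j + 2) := by
      unfold Dop; rw [if_neg (by omega), if_pos rfl]; norm_num
    have ih' := ih
    rw [show j + 2 - 1 = j + 1 from by omega] at ih'
    rw [peel1, peel2, congr1, peelR, d1, d2]
    have key : ∑ i ∈ Icc 1 (j + 1), dot3 (m i) (Dop (j + 2) m i)
        = -∑ i ∈ Icc 1 (j + 1), dot3 (m (i + 1) - m i) (m (i + 1) - m i)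
          - dot3 (m (j + 2)) (Dop (j + 2) m (j + 2)) := by
      rw [← ih', peel3]; ring
    rw [key, d3]
    simp only [dot3_expand, Pi.sub_apply, Pi.add_apply, Pi.smul_apply, smul_eq_mul]
    ring

lemma sum_lap (N : ℕ) (hN : 2 ≤ N) (m : ℕ → Fin 3 → ℝ) :
    ∑ i ∈ Icc 1 N, dot3 (m i) (glap N m i)
      = -(((gridh N) ^ 2)⁻¹
          * ∑ i ∈ Icc 1 (N - 1), dot3 (m (i + 1) - m i) (m (i + 1) - m i)) := by
  have h : ∀ i, dot3 (m i) (glap N m i) = ((gridh N) ^ 2)⁻¹ * dot3 (m i) (Dop N m i) :=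
    fun i => by rw [glap_eq_Dop, dot3_smul_right]
  simp only [h]
  rw [← Finset.mul_sum, sbp m N hN]
  ring

/-! ### Key coercivity lemma -/

lemma keylem (N : ℕ) (hN : 2 ≤ N) (c α : ℝ) (hc : 0 < c) (hα : 0 < α)
    (mhat m : ℕ → Fin 3 → ℝ)
    (H : ∀ i ∈ Icc 1 N, c • m i + cross3 (mhat i) (glap N m i)
          + α • cross3 (mhat i) (cross3 (mhat i) (glap N m i)) = 0) :
    ∀ i ∈ Icc 1 N, m i = 0 := by
  have hNpos : (0 : ℝ) < (N : ℝ) := by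
    have : 0 < N := by omega
    exact_mod_cast this
  have hg : (0 : ℝ) < ((gridh N) ^ 2)⁻¹ := by
    unfold gridh; positivity
  have Hs : ∀ i ∈ Icc 1 N, c * dot3 (m i) (glap N m i)
      = α * dot3 (cross3 (mhat i) (glap N m i)) (cross3 (mhat i) (glap N m i)) := by
    intro i hi
    have h := congrArg (fun v => dot3 v (glap N m i)) (H i hi)
    simp only [dot3_add_left, dot3_smul_left, dot3_zero_left, dot3_cross_self,
      dot3_double_cross] at h
    linarith
  have hsum : c * ∑ i ∈ Icc 1 N, dot3 (m i) (glap N m i)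
      = α * ∑ i ∈ Icc 1 N,
          dot3 (cross3 (mhat i) (glap N m i)) (cross3 (mhat i) (glap N m i)) := by
    rw [Finset.mul_sum, Finset.mul_sum]; exact Finset.sum_congr rfl Hs
  have hR : 0 ≤ ∑ i ∈ Icc 1 N,
      dot3 (cross3 (mhat i) (glap N m i)) (cross3 (mhat i) (glap N m i)) :=
    Finset.sum_nonneg fun i _ => dot3_self_nonneg _
  have hS : 0 ≤ ∑ i ∈ Icc 1 (N - 1), dot3 (m (i + 1) - m i) (m (i + 1) - m i) :=
    Finset.sum_nonneg fun i _ => dot3_self_nonneg _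
  have hL := sum_lap N hN m
  rw [hL] at hsum
  have hS0 : ∑ i ∈ Icc 1 (N - 1), dot3 (m (i + 1) - m i) (m (i + 1) - m i) = 0 := by
    have hle : ∑ i ∈ Icc 1 (N - 1), dot3 (m (i + 1) - m i) (m (i + 1) - m i) ≤ 0 := by
      nlinarith [mul_pos hc hg, mul_nonneg hα.le hR]
    exact le_antisymm hle hS
  have hd : ∀ i ∈ Icc 1 (N - 1), m (i + 1) = m i := by
    intro i hi
    have h1 := (Finset.sum_eq_zero_iff_of_nonneg
      (fun i _ => dot3_self_nonneg (m (i + 1) - m i))).1 hS0 i hi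
    have h2 := dot3_self_eq_zero h1
    exact sub_eq_zero.1 h2
  have hlap0 : ∀ i ∈ Icc 1 N, glap N m i = 0 := by
    intro i hi
    simp only [mem_Icc] at hi
    unfold glap
    split_ifs with h1 h2
    · have e := hd 1 (by simp only [mem_Icc]; omega)
      rw [show (1 : ℕ) + 1 = 2 from rfl] at e
      rw [e, sub_self, smul_zero]
    · have e := hd (N - 1) (by simp only [mem_Icc]; omega)
      rw [show N - 1 + 1 = N from by omega] at e
      rw [e, sub_self, smul_zero]
    · have e1 := hd i (by simp only [mem_Icc]; omega)
      have e2 := hd (i - 1) (by simp only [mem_Icc]; omega)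
      rw [show i - 1 + 1 = i from by omega] at e2
      rw [e1, ← e2]
      have e3 : m i - (2 : ℝ) • m i + m i = 0 := by module
      rw [e3, smul_zero]
  intro i hi
  have h := H i hi
  rw [hlap0 i hi, cross3_zero_right, cross3_zero_right, smul_zero, add_zero, add_zero] at h
  exact (smul_eq_zero.1 h).resolve_left (ne_of_gt hc)

/-! ### Linearity of the operator -/

lemma glap_sub (N : ℕ) (f g : ℕ → Fin 3 → ℝ) (i : ℕ) :
    glap N (fun j => f j - g j) i = glap N f i - glap N g i := by
  unfold glap
  split_ifs
  all_goals
    funext j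
    simp only [Pi.smul_apply, Pi.sub_apply, Pi.add_apply, smul_eq_mul]
    ring

lemma glap_add (N : ℕ) (f g : ℕ → Fin 3 → ℝ) (i : ℕ) :
    glap N (f + g) i = glap N f i + glap N g i := by
  unfold glap
  split_ifs
  all_goals
    funext j
    simp only [Pi.smul_apply, Pi.sub_apply, Pi.add_apply, smul_eq_mul]
    ring

lemma glap_smul (N : ℕ) (r : ℝ) (f : ℕ → Fin 3 → ℝ) (i : ℕ) :
    glap N (r • f) i = r • glap N f i := by
  unfold glap
  split_ifs
  all_goals
    funext j
    simp only [Pi.smul_apply, Pi.sub_apply, Pi.add_apply, smul_eq_mul]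
    ring

def extg (N : ℕ) (f : Fin N → Fin 3 → ℝ) : ℕ → Fin 3 → ℝ :=
  fun i => if h : 1 ≤ i ∧ i ≤ N then f ⟨i - 1, by omega⟩ else 0

lemma extg_add (N : ℕ) (f g : Fin N → Fin 3 → ℝ) :
    extg N (f + g) = extg N f + extg N g := by
  funext i; by_cases h : 1 ≤ i ∧ i ≤ N <;> simp [extg, h]

lemma extg_smul (N : ℕ) (r : ℝ) (f : Fin N → Fin 3 → ℝ) :
    extg N (r • f) = r • extg N f := by
  funext i; by_cases h : 1 ≤ i ∧ i ≤ N <;> simp [extg, h]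

def Lop (N : ℕ) (c α : ℝ) (mhat g : ℕ → Fin 3 → ℝ) (i : ℕ) : Fin 3 → ℝ :=
  c • g i + cross3 (mhat i) (glap N g i)
    + α • cross3 (mhat i) (cross3 (mhat i) (glap N g i))

lemma Lop_add (N : ℕ) (c α : ℝ) (mhat u v : ℕ → Fin 3 → ℝ) (i : ℕ) :
    Lop N c α mhat (u + v) i = Lop N c α mhat u i + Lop N c α mhat v i := by
  simp only [Lop, glap_add, cross3_add_right, Pi.add_apply]
  module

lemma Lop_smul (N : ℕ) (c α : ℝ) (mhat : ℕ → Fin 3 → ℝ) (r : ℝ) (u : ℕ → Fin 3 → ℝ) (i : ℕ) :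
    Lop N c α mhat (r • u) i = r • Lop N c α mhat u i := by
  simp only [Lop, glap_smul, cross3_smul_right, Pi.smul_apply]
  module

def Tmap (N : ℕ) (c α : ℝ) (mhat : ℕ → Fin 3 → ℝ) :
    (Fin N → Fin 3 → ℝ) →ₗ[ℝ] (Fin N → Fin 3 → ℝ) where
  toFun f := fun j => Lop N c α mhat (extg N f) (j.1 + 1)
  map_add' f g := by
    funext j
    show Lop N c α mhat (extg N (f + g)) (j.1 + 1)
      = Lop N c α mhat (extg N f) (j.1 + 1) + Lop N c α mhat (extg N g) (j.1 + 1)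
    rw [extg_add]
    exact Lop_add _ _ _ _ _ _ _
  map_smul' r f := by
    funext j
    show Lop N c α mhat (extg N (r • f)) (j.1 + 1)
      = r • Lop N c α mhat (extg N f) (j.1 + 1)
    rw [extg_smul]
    exact Lop_smul _ _ _ _ _ _ _

/-! ### Vector algebra conversions -/

lemma vec_solve (k α : ℝ) (_hk : k ≠ 0) (a u q b : Fin 3 → ℝ)
    (h : (3 / (2 * k)) • u + cross3 a b + α • cross3 a (cross3 a b) = k⁻¹ • q) :
    k⁻¹ • ((3 / 2 : ℝ) • u - q) = -cross3 a b - α • cross3 a (cross3 a b) := by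
  funext j
  have e := congrFun h j
  simp only [Pi.add_apply, Pi.smul_apply, Pi.sub_apply, Pi.neg_apply, smul_eq_mul] at e ⊢
  linear_combination e

lemma vec_diff (k α : ℝ) (_hk : k ≠ 0) (a u₁ u₂ q b₁ b₂ : Fin 3 → ℝ)
    (h₁ : k⁻¹ • ((3 / 2 : ℝ) • u₁ - q) = -cross3 a b₁ - α • cross3 a (cross3 a b₁))
    (h₂ : k⁻¹ • ((3 / 2 : ℝ) • u₂ - q) = -cross3 a b₂ - α • cross3 a (cross3 a b₂)) :
    (3 / (2 * k)) • (u₁ - u₂) + cross3 a (b₁ - b₂)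
      + α • cross3 a (cross3 a (b₁ - b₂)) = 0 := by
  simp only [cross3_sub_right]
  funext j
  have e₁ := congrFun h₁ j
  have e₂ := congrFun h₂ j
  simp only [Pi.add_apply, Pi.smul_apply, Pi.sub_apply, Pi.neg_apply, Pi.zero_apply,
    smul_eq_mul] at e₁ e₂ ⊢
  linear_combination e₁ - e₂

/-! ### Main theorem -/

/-- unique solvability of the semi-implicit BDF2 time-marching step:
there is exactly one grid function `m̃` on `{1,…,N}` solving
`((3/2)·m̃ − p)/k = − m̂ × Δ_h m̃ − α·m̂ × (m̂ × Δ_h m̃)` at every grid point. -/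
theorem semi_implicit_step_uniquely_solvable
    (N : ℕ) (hN : 2 ≤ N) (k α : ℝ) (hk : 0 < k) (hα : 0 < α)
    (p mhat : ℕ → Fin 3 → ℝ) :
    (∃ mt : ℕ → Fin 3 → ℝ, ∀ i ∈ Finset.Icc 1 N,
        k⁻¹ • ((3 / 2 : ℝ) • mt i - p i) =
          - cross3 (mhat i) (glap N mt i)
            - α • cross3 (mhat i) (cross3 (mhat i) (glap N mt i))) ∧
    (∀ mt₁ mt₂ : ℕ → Fin 3 → ℝ,
        (∀ i ∈ Finset.Icc 1 N,
          k⁻¹ • ((3 / 2 : ℝ) • mt₁ i - p i) =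
            - cross3 (mhat i) (glap N mt₁ i)
              - α • cross3 (mhat i) (cross3 (mhat i) (glap N mt₁ i))) →
        (∀ i ∈ Finset.Icc 1 N,
          k⁻¹ • ((3 / 2 : ℝ) • mt₂ i - p i) =
            - cross3 (mhat i) (glap N mt₂ i)
              - α • cross3 (mhat i) (cross3 (mhat i) (glap N mt₂ i))) →
        ∀ i ∈ Finset.Icc 1 N, mt₁ i = mt₂ i) := by
  have hk' : k ≠ 0 := ne_of_gt hk
  have hc : (0 : ℝ) < 3 / (2 * k) := by positivity
  constructor
  · -- existence
    have Tinj : Function.Injective (Tmap N (3 / (2 * k)) α mhat) := by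
      have hker : ∀ f, Tmap N (3 / (2 * k)) α mhat f = 0 → f = 0 := by
        intro f hf0
        have Hz : ∀ i ∈ Icc 1 N,
            (3 / (2 * k)) • (extg N f) i + cross3 (mhat i) (glap N (extg N f) i)
              + α • cross3 (mhat i) (cross3 (mhat i) (glap N (extg N f) i)) = 0 := by
          intro i hi
          simp only [mem_Icc] at hi
          have hj : i - 1 < N := by omega
          have e := congrFun hf0 ⟨i - 1, hj⟩
          simp only [Tmap, LinearMap.coe_mk, AddHom.coe_mk, Pi.zero_apply] at e
          rw [show i - 1 + 1 = i from by omega] at e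
          exact e
        have hz := keylem N hN (3 / (2 * k)) α hc hα mhat (extg N f) Hz
        funext j
        have h0 := hz (j.1 + 1) (by simp only [mem_Icc]; omega)
        have e2 : extg N f (j.1 + 1) = f j := by
          unfold extg
          rw [dif_pos ⟨by omega, by omega⟩]
          exact congrArg f (Fin.ext (by simp))
        rw [e2] at h0
        simpa using h0
      intro f g h
      have h0 : f - g = 0 := hker _ (by rw [map_sub, h, sub_self])
      exact sub_eq_zero.1 h0
    have Tsurj : Function.Surjective (Tmap N (3 / (2 * k)) α mhat) :=
      LinearMap.injective_iff_surjective.1 Tinj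
    obtain ⟨f, hf⟩ := Tsurj (fun j => k⁻¹ • p (j.1 + 1))
    refine ⟨extg N f, ?_⟩
    intro i hi
    simp only [mem_Icc] at hi
    have hj : i - 1 < N := by omega
    have e := congrFun hf ⟨i - 1, hj⟩
    simp only [Tmap, LinearMap.coe_mk, AddHom.coe_mk] at e
    rw [show i - 1 + 1 = i from by omega] at e
    exact vec_solve k α hk' (mhat i) (extg N f i) (p i) (glap N (extg N f) i) e
  · -- uniqueness
    intro mt₁ mt₂ H1 H2
    have Hd : ∀ i ∈ Icc 1 N,
        (3 / (2 * k)) • (fun j => mt₁ j - mt₂ j) i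
          + cross3 (mhat i) (glap N (fun j => mt₁ j - mt₂ j) i)
          + α • cross3 (mhat i) (cross3 (mhat i) (glap N (fun j => mt₁ j - mt₂ j) i)) = 0 := by
      intro i hi
      rw [glap_sub]
      exact vec_diff k α hk' (mhat i) (mt₁ i) (mt₂ i) (p i) (glap N mt₁ i) (glap N mt₂ i)
        (H1 i hi) (H2 i hi)
    have hz := keylem N hN (3 / (2 * k)) α hc hα mhat (fun j => mt₁ j - mt₂ j) Hd
    intro i hi
    exact sub_eq_zero.1 (hz i hi)
end
end

section
/- Fix k > 0, α ≥ 0 and a grid function m̂, and define T(m̃) = (3/(2k))·m̃ + m̂ × (Δ_h m̃) + α · m̂ × ( m̂ × (Δ_h m̃) ) for grid functions m̃. Then for any two grid functions m̃₁, m̃₂, writing δ = m̃₁ − m̃₂, one has the monotonicity identity ⟨ T(m̃₁) − T(m̃₂), −Δ_h δ ⟩ = (3/(2k))·‖∇_h δ‖₂² + α·‖ m̂ × (Δ_h δ) ‖₂². In particular ⟨ T(m̃₁) − T(m̃₂), −Δ_h δ ⟩ ≥ 0, so T is monotone with respect to the pairing against −Δ_h δ. -/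
noncomputable section

open Finset

lemma cross3_sub (a x y : Fin 3 → ℝ) : cross3 a (x - y) = cross3 a x - cross3 a y := by
  funext j; fin_cases j <;> simp [cross3] <;> ring

lemma sbp_s1 (u : ℕ → ℝ) (m : ℕ) :
    ∑ i ∈ Finset.Icc 1 (m + 2), u i *
      (if i = 1 then u 1 - u 2
       else if i = m + 2 then u (m + 2) - u (m + 2 - 1)
       else 2 * u i - u (i + 1) - u (i - 1))
    = ∑ i ∈ Finset.Icc 1 (m + 1), (u (i + 1) - u i) ^ 2 := by
  induction m with
  | zero =>
    have h2 : Finset.Icc 1 2 = {1, 2} := by decide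
    have h1 : Finset.Icc 1 1 = {1} := by decide
    rw [h2, h1]; norm_num; ring
  | succ n ih =>
    have e1 : ∀ i ∈ Finset.Icc 1 (n + 1),
        u i * (if i = 1 then u 1 - u 2
          else if i = n + 1 + 2 then u (n + 1 + 2) - u (n + 1 + 2 - 1)
          else 2 * u i - u (i + 1) - u (i - 1))
        = u i * (if i = 1 then u 1 - u 2
          else if i = n + 2 then u (n + 2) - u (n + 2 - 1)
          else 2 * u i - u (i + 1) - u (i - 1)) := by
      intro i hi
      have hi' : i ≤ n + 1 := (Finset.mem_Icc.mp hi).2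
      by_cases h1 : i = 1
      · simp [h1]
      · simp [h1, show i ≠ n + 3 by omega, show i ≠ n + 2 by omega]
    have ih2 : (∑ i ∈ Finset.Icc 1 (n + 1), u i *
        (if i = 1 then u 1 - u 2
         else if i = n + 2 then u (n + 2) - u (n + 2 - 1)
         else 2 * u i - u (i + 1) - u (i - 1)))
        + u (n + 2) * (u (n + 2) - u (n + 1))
        = ∑ i ∈ Finset.Icc 1 (n + 1), (u (i + 1) - u i) ^ 2 := by
      rw [← ih, Finset.sum_Icc_succ_top (by omega : 1 ≤ n + 2)]
      norm_num
    rw [show n + 1 + 2 = n + 3 from rfl, show n + 1 + 1 = n + 2 from rfl,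
      Finset.sum_Icc_succ_top (by omega : 1 ≤ n + 3),
      Finset.sum_Icc_succ_top (by omega : 1 ≤ n + 2),
      Finset.sum_Icc_succ_top (by omega : 1 ≤ n + 2),
      Finset.sum_congr rfl (fun i hi => e1 i (by simpa using hi))]
    rw [← ih2]
    have c1 : (if n + 3 = 1 then u 1 - u 2 else if n + 3 = n + 3 then u (n+3) - u (n+3-1) else 2 * u (n+3) - u (n+3+1) - u (n+3-1)) = u (n+3) - u (n+2) := by simp
    have c2 : (if n + 2 = 1 then u 1 - u 2 else if n + 2 = n + 3 then u (n+3) - u (n+3-1) else 2 * u (n+2) - u (n+2+1) - u (n+2-1)) = 2 * u (n+2) - u (n+3) - u (n+1) := by simp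
    rw [c1, c2]; ring

/-- monotonicity identity for the semi-implicit operator
`T(m̃) = (3/(2k))·m̃ + m̂ × Δ_h m̃ + α·m̂ × (m̂ × Δ_h m̃)`:
with `δ = m̃₁ − m̃₂`, one has
`⟨T m̃₁ − T m̃₂, −Δ_h δ⟩ = (3/(2k))‖∇_h δ‖₂² + α‖m̂ × Δ_h δ‖₂² ≥ 0`. -/
theorem semi_implicit_operator_monotone
    (N : ℕ) (hN : 2 ≤ N) (k α : ℝ) (hk : 0 < k) (hα : 0 ≤ α)
    (mhat mt₁ mt₂ : ℕ → Fin 3 → ℝ)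
    (T : (ℕ → Fin 3 → ℝ) → (ℕ → Fin 3 → ℝ))
    (hT : ∀ mt : ℕ → Fin 3 → ℝ, ∀ i : ℕ,
      T mt i = (3 / (2 * k)) • mt i + cross3 (mhat i) (glap N mt i)
        + α • cross3 (mhat i) (cross3 (mhat i) (glap N mt i)))
    (δ : ℕ → Fin 3 → ℝ) (hδ : ∀ i, δ i = mt₁ i - mt₂ i) :
    gip N (fun i => T mt₁ i - T mt₂ i) (fun i => - glap N δ i) =
      (3 / (2 * k)) * (gnormGrad N δ) ^ 2
        + α * (gnorm2 N (fun i => cross3 (mhat i) (glap N δ i))) ^ 2 ∧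
    0 ≤ gip N (fun i => T mt₁ i - T mt₂ i) (fun i => - glap N δ i) := by
  obtain ⟨m, rfl⟩ : ∃ m, N = m + 2 := ⟨N - 2, by omega⟩
  set N := m + 2 with hNdef
  clear hNdef
  have hh : 0 < gridh N := by unfold gridh; positivity
  -- linearity of the Laplacian
  have hlap : ∀ i, glap N mt₁ i - glap N mt₂ i = glap N δ i := by
    intro i
    simp only [glap, hδ]
    split_ifs <;> module
  -- pointwise difference of T
  have hTd : ∀ i, T mt₁ i - T mt₂ i =
      (3 / (2 * k)) • δ i + cross3 (mhat i) (glap N δ i)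
        + α • cross3 (mhat i) (cross3 (mhat i) (glap N δ i)) := by
    intro i
    rw [hT, hT, hδ i, ← hlap i]
    simp only [cross3_sub]
    module
  -- pointwise dot product identity
  have hdot : ∀ i, dot3 (T mt₁ i - T mt₂ i) (- glap N δ i) =
      (3 / (2 * k)) * dot3 (δ i) (- glap N δ i)
        + α * dot3 (cross3 (mhat i) (glap N δ i)) (cross3 (mhat i) (glap N δ i)) := by
    intro i
    rw [hTd i]
    simp only [dot3, cross3, Fin.sum_univ_three, Pi.add_apply, Pi.smul_apply, Pi.neg_apply,
      smul_eq_mul, Matrix.cons_val_zero, Matrix.cons_val_one, Matrix.head_cons,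
      Matrix.cons_val_two, Matrix.tail_cons]
    ring
  set C : ℕ → Fin 3 → ℝ := fun i => cross3 (mhat i) (glap N δ i) with hC
  -- split the inner product
  have e1 : gip N (fun i => T mt₁ i - T mt₂ i) (fun i => - glap N δ i)
      = (3 / (2 * k)) * gip N δ (fun i => - glap N δ i) + α * gip N C C := by
    unfold gip
    rw [Finset.sum_congr rfl (fun i _ => hdot i), Finset.sum_add_distrib,
      ← Finset.mul_sum, ← Finset.mul_sum]
    ring
  -- summation by parts
  set t : ℝ := ((gridh N) ^ 2)⁻¹ with ht
  have hg : ∀ i j, (- glap N δ i) j = t *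
      (if i = 1 then δ 1 j - δ 2 j
       else if i = N then δ N j - δ (N - 1) j
       else 2 * δ i j - δ (i + 1) j - δ (i - 1) j) := by
    intro i j
    simp only [glap, ht]
    split_ifs <;>
      simp only [Pi.neg_apply, Pi.smul_apply, Pi.sub_apply, Pi.add_apply, smul_eq_mul] <;>
      ring
  have e2 : gip N δ (fun i => - glap N δ i) = gipGrad N δ δ := by
    unfold gip gipGrad
    congr 1
    have lhs : ∑ i ∈ Finset.Icc 1 N, dot3 (δ i) (- glap N δ i)
        = ∑ j : Fin 3, ∑ i ∈ Finset.Icc 1 N, t * (δ i j *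
          (if i = 1 then δ 1 j - δ 2 j
           else if i = N then δ N j - δ (N - 1) j
           else 2 * δ i j - δ (i + 1) j - δ (i - 1) j)) := by
      rw [Finset.sum_comm]
      refine Finset.sum_congr rfl fun i _ => ?_
      unfold dot3
      refine Finset.sum_congr rfl fun j _ => ?_
      rw [hg i j]; ring
    have rhs : ∑ i ∈ Finset.Icc 1 (N - 1), dot3 (ggrad N δ i) (ggrad N δ i)
        = ∑ j : Fin 3, ∑ i ∈ Finset.Icc 1 (m + 1), t * ((δ (i + 1) j - δ i j) ^ 2) := by
      rw [Finset.sum_comm, show N - 1 = m + 1 from rfl]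
      refine Finset.sum_congr rfl fun i _ => ?_
      unfold dot3 ggrad
      refine Finset.sum_congr rfl fun j _ => ?_
      simp only [Pi.smul_apply, Pi.sub_apply, smul_eq_mul, ht]
      ring
    rw [lhs, rhs]
    refine Finset.sum_congr rfl fun j _ => ?_
    rw [← Finset.mul_sum, ← Finset.mul_sum]
    congr 1
    exact sbp_s1 (fun i => δ i j) m
  -- squares of norms
  have hsq1 : (gnormGrad N δ) ^ 2 = gipGrad N δ δ := by
    unfold gnormGrad
    rw [sq, Real.mul_self_sqrt]
    unfold gipGrad
    exact mul_nonneg hh.le (Finset.sum_nonneg fun i _ => dot3_self_nonneg _)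
  have hsq2 : (gnorm2 N C) ^ 2 = gip N C C := by
    unfold gnorm2
    rw [sq, Real.mul_self_sqrt]
    unfold gip
    exact mul_nonneg hh.le (Finset.sum_nonneg fun i _ => dot3_self_nonneg _)
  have main : gip N (fun i => T mt₁ i - T mt₂ i) (fun i => - glap N δ i) =
      (3 / (2 * k)) * (gnormGrad N δ) ^ 2 + α * (gnorm2 N C) ^ 2 := by
    rw [e1, e2, hsq1, hsq2]
  refine ⟨main, ?_⟩
  rw [main]
  have : 0 < 3 / (2 * k) := by positivity
  exact add_nonneg (mul_nonneg this.le (sq_nonneg _)) (mul_nonneg hα (sq_nonneg _))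
end
end

section
/- L² error estimate for the projection step: let m_e be a grid function with |(m_e)_i| = 1 for every i, let m¹ be a grid function with ‖m¹‖_∞ ≤ K, and set m̲ = m_e + h²·m¹. Let m̃ be a grid function with |m̃_i| ≥ 1/2 for every i, and define the projected grid function m by m_i = m̃_i/|m̃_i|. Set e = m − m̲ and ẽ = m̃ − m̲. Then ‖e‖₂ ≤ 2·‖ẽ‖₂ + K·h². -/
noncomputable section

open Finset

lemma norm3_nonneg (a : Fin 3 → ℝ) : 0 ≤ norm3 a := Real.sqrt_nonneg _

lemma sq_norm3 (a : Fin 3 → ℝ) : norm3 a ^ 2 = dot3 a a := Real.sq_sqrt (dot3_self_nonneg a)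

lemma dot3_le (a b : Fin 3 → ℝ) : dot3 a b ≤ norm3 a * norm3 b := by
  have h1 : (dot3 a b) ^ 2 ≤ (norm3 a * norm3 b) ^ 2 := by
    rw [mul_pow, sq_norm3, sq_norm3]
    have := Finset.sum_mul_sq_le_sq_mul_sq Finset.univ a b
    simpa [dot3, sq] using this
  have h2 : 0 ≤ norm3 a * norm3 b := mul_nonneg (norm3_nonneg a) (norm3_nonneg b)
  nlinarith [abs_nonneg (dot3 a b), le_abs_self (dot3 a b)]

lemma norm3_add_le (a b : Fin 3 → ℝ) : norm3 (a + b) ≤ norm3 a + norm3 b := by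
  have hexp : dot3 (a + b) (a + b) = dot3 a a + 2 * dot3 a b + dot3 b b := by
    simp only [dot3, Pi.add_apply, ← Finset.sum_add_distrib, Finset.mul_sum]
    exact Finset.sum_congr rfl fun j _ => by ring
  have h1 : norm3 (a + b) ^ 2 ≤ (norm3 a + norm3 b) ^ 2 := by
    rw [sq_norm3, hexp]
    nlinarith [dot3_le a b, sq_norm3 a, sq_norm3 b]
  have h2 : 0 ≤ norm3 a + norm3 b := add_nonneg (norm3_nonneg a) (norm3_nonneg b)
  nlinarith [norm3_nonneg (a + b)]

lemma norm3_smul (c : ℝ) (a : Fin 3 → ℝ) : norm3 (c • a) = |c| * norm3 a := by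
  have h : dot3 (c • a) (c • a) = c ^ 2 * dot3 a a := by
    simp only [dot3, Pi.smul_apply, smul_eq_mul, Finset.mul_sum]
    exact Finset.sum_congr rfl fun j _ => by ring
  rw [norm3, h, Real.sqrt_mul (sq_nonneg c), Real.sqrt_sq_eq_abs, norm3]

lemma norm3_neg (a : Fin 3 → ℝ) : norm3 (-a) = norm3 a := by
  have := norm3_smul (-1) a
  simpa using this

lemma abs_norm3_sub_norm3_le (a b : Fin 3 → ℝ) : |norm3 a - norm3 b| ≤ norm3 (a - b) := by
  have h1 : norm3 a ≤ norm3 (a - b) + norm3 b := by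
    have := norm3_add_le (a - b) b; simpa using this
  have h2 : norm3 b ≤ norm3 (a - b) + norm3 a := by
    have := norm3_add_le (b - a) a
    rw [show b - a = -(a - b) by abel, norm3_neg] at this
    simpa using this
  rw [abs_sub_le_iff]; constructor <;> linarith

lemma le_gsup' (N : ℕ) (f : ℕ → Fin 3 → ℝ) (i : ℕ) (hi : i ∈ Finset.Icc 1 N) :
    norm3 (f i) ≤ gsup N f := by
  have hb : BddAbove (Set.range fun j => ⨆ _ : j ∈ Finset.Icc 1 N, norm3 (f j)) := by
    refine ⟨∑ k ∈ Finset.Icc 1 N, norm3 (f k), ?_⟩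
    rintro x ⟨j, rfl⟩
    show (⨆ _ : j ∈ Finset.Icc 1 N, norm3 (f j)) ≤ _
    by_cases hj : j ∈ Finset.Icc 1 N
    · rw [ciSup_pos hj]
      exact Finset.single_le_sum (fun k _ => norm3_nonneg _) hj
    · rw [ciSup_neg hj, Real.sSup_empty]
      exact Finset.sum_nonneg fun k _ => norm3_nonneg _
  have h1 : (⨆ _ : i ∈ Finset.Icc 1 N, norm3 (f i)) = norm3 (f i) := ciSup_pos hi
  calc norm3 (f i) = ⨆ _ : i ∈ Finset.Icc 1 N, norm3 (f i) := h1.symm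
    _ ≤ gsup N f := le_ciSup hb i

/-- L² error estimate for the projection step:
with `m̲ = m_e + h²·m¹`, `|m_e| ≡ 1`, `‖m¹‖_∞ ≤ K`, `|m̃| ≥ 1/2` on the grid and
`m = m̃/|m̃|`, the errors `e = m − m̲`, `ẽ = m̃ − m̲` satisfy `‖e‖₂ ≤ 2‖ẽ‖₂ + K·h²`. -/
theorem projection_step_L2_error
    (N : ℕ) (hN : 2 ≤ N) (K : ℝ)
    (me m1 mt : ℕ → Fin 3 → ℝ)
    (hme : ∀ i ∈ Finset.Icc 1 N, norm3 (me i) = 1)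
    (hm1 : gsup N m1 ≤ K)
    (hmt : ∀ i ∈ Finset.Icc 1 N, 1 / 2 ≤ norm3 (mt i))
    (m mbar e et : ℕ → Fin 3 → ℝ)
    (hm : ∀ i, m i = (norm3 (mt i))⁻¹ • mt i)
    (hmbar : ∀ i, mbar i = me i + (gridh N) ^ 2 • m1 i)
    (he : ∀ i, e i = m i - mbar i)
    (het : ∀ i, et i = mt i - mbar i) :
    gnorm2 N e ≤ 2 * gnorm2 N et + K * (gridh N) ^ 2 := by
  
  have hNpos : (0:ℝ) < N := by exact_mod_cast Nat.lt_of_lt_of_le (by norm_num) hN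
  have hpos : 0 < gridh N := by rw [gridh]; positivity
  have hhN : gridh N * N = 1 := by rw [gridh]; field_simp
  have h1N : 1 ∈ Finset.Icc 1 N := Finset.mem_Icc.mpr ⟨le_refl 1, by omega⟩
  have hKi : ∀ i ∈ Finset.Icc 1 N, norm3 (m1 i) ≤ K := fun i hi =>
    (le_gsup' N m1 i hi).trans hm1
  have hK : 0 ≤ K := (norm3_nonneg _).trans (hKi 1 h1N)
  set c := K * (gridh N) ^ 2 with hc_def
  have hc : 0 ≤ c := by positivity
  -- pointwise bound
  have key : ∀ i ∈ Finset.Icc 1 N, norm3 (e i) ≤ 2 * norm3 (et i) + c := by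
    intro i hi
    set r := norm3 (mt i) with hr
    have hr2 : (1:ℝ)/2 ≤ r := hmt i hi
    have hrpos : 0 < r := by linarith
    have hsplit : e i = (m i - mt i) + et i := by rw [he i, het i]; abel
    have hms : m i - mt i = (r⁻¹ - 1) • mt i := by
      rw [hm i, sub_smul, one_smul]
    have h5 : norm3 (m i - mt i) = |r⁻¹ - 1| * r := by
      rw [hms, norm3_smul]
    have h6 : |r⁻¹ - 1| * r = |1 - r| := by
      have hx : (r⁻¹ - 1) * r = 1 - r := by field_simp
      calc |r⁻¹ - 1| * r = |r⁻¹ - 1| * |r| := by rw [abs_of_pos hrpos]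
        _ = |(r⁻¹ - 1) * r| := (abs_mul _ _).symm
        _ = |1 - r| := by rw [hx]
    have h7 : |1 - r| ≤ norm3 (me i - mt i) := by
      have h := abs_norm3_sub_norm3_le (me i) (mt i)
      rwa [hme i hi, ← hr] at h
    have h8 : me i - mt i = -(et i + (gridh N) ^ 2 • m1 i) := by
      rw [het i, hmbar i]; abel
    have h9 : norm3 (me i - mt i) ≤ norm3 (et i) + c := by
      rw [h8, norm3_neg]
      have ht := norm3_add_le (et i) ((gridh N) ^ 2 • m1 i)
      have hs : norm3 ((gridh N) ^ 2 • m1 i) = (gridh N) ^ 2 * norm3 (m1 i) := by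
        rw [norm3_smul, abs_of_pos (by positivity)]
      have hb := hKi i hi
      nlinarith [sq_nonneg (gridh N)]
    have h10 : norm3 (m i - mt i) ≤ norm3 (et i) + c := by
      rw [h5, h6]; linarith
    calc norm3 (e i) = norm3 ((m i - mt i) + et i) := by rw [hsplit]
      _ ≤ norm3 (m i - mt i) + norm3 (et i) := norm3_add_le _ _
      _ ≤ 2 * norm3 (et i) + c := by linarith
  -- L² machinery
  set B := gnorm2 N et with hB_def
  have hgip_et : gip N et et = gridh N * ∑ i ∈ Finset.Icc 1 N, norm3 (et i) ^ 2 := by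
    rw [gip]
    congr 1
    exact Finset.sum_congr rfl fun i _ => (sq_norm3 _).symm
  have hgip_et_nonneg : 0 ≤ gip N et et :=
    mul_nonneg hpos.le (Finset.sum_nonneg fun i _ => dot3_self_nonneg _)
  have hB0 : 0 ≤ B := Real.sqrt_nonneg _
  have hB2 : B ^ 2 = gridh N * ∑ i ∈ Finset.Icc 1 N, norm3 (et i) ^ 2 := by
    rw [hB_def, gnorm2, Real.sq_sqrt hgip_et_nonneg, hgip_et]
  have hcard : ((Finset.Icc 1 N).card : ℝ) = N := by
    rw [Nat.card_Icc, Nat.add_sub_cancel]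
  have hsumb : gridh N * ∑ i ∈ Finset.Icc 1 N, norm3 (et i) ≤ B := by
    have hcs := Finset.sum_mul_sq_le_sq_mul_sq (Finset.Icc 1 N)
      (fun i => norm3 (et i)) (fun _ => (1:ℝ))
    simp only [mul_one, one_pow, Finset.sum_const, nsmul_eq_mul] at hcs
    have hx : 0 ≤ gridh N * ∑ i ∈ Finset.Icc 1 N, norm3 (et i) :=
      mul_nonneg hpos.le (Finset.sum_nonneg fun i _ => norm3_nonneg _)
    have hsq : (gridh N * ∑ i ∈ Finset.Icc 1 N, norm3 (et i)) ^ 2 ≤ B ^ 2 := by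
      rw [hB2]
      have : (gridh N * ∑ i ∈ Finset.Icc 1 N, norm3 (et i)) ^ 2
          = gridh N * gridh N * (∑ i ∈ Finset.Icc 1 N, norm3 (et i)) ^ 2 := by ring
      rw [this]
      calc gridh N * gridh N * (∑ i ∈ Finset.Icc 1 N, norm3 (et i)) ^ 2
          ≤ gridh N * gridh N * ((∑ i ∈ Finset.Icc 1 N, norm3 (et i) ^ 2) * N) := by
            nlinarith [sq_nonneg (gridh N), hcard ▸ hcs]
        _ = (gridh N * N) * (gridh N * ∑ i ∈ Finset.Icc 1 N, norm3 (et i) ^ 2) := by ring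
        _ = gridh N * ∑ i ∈ Finset.Icc 1 N, norm3 (et i) ^ 2 := by rw [hhN, one_mul]
    nlinarith
  have hgip_e : gip N e e = gridh N * ∑ i ∈ Finset.Icc 1 N, norm3 (e i) ^ 2 := by
    rw [gip]
    congr 1
    exact Finset.sum_congr rfl fun i _ => (sq_norm3 _).symm
  have hexp : ∑ i ∈ Finset.Icc 1 N, (2 * norm3 (et i) + c) ^ 2
      = 4 * (∑ i ∈ Finset.Icc 1 N, norm3 (et i) ^ 2)
        + 4 * c * (∑ i ∈ Finset.Icc 1 N, norm3 (et i)) + N * c ^ 2 := by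
    rw [Finset.sum_congr rfl (fun i _ => show (2 * norm3 (et i) + c) ^ 2
      = 4 * norm3 (et i) ^ 2 + 4 * c * norm3 (et i) + c ^ 2 by ring)]
    rw [Finset.sum_add_distrib, Finset.sum_add_distrib, ← Finset.mul_sum, ← Finset.mul_sum,
      Finset.sum_const, nsmul_eq_mul, hcard]
  have hmain : gip N e e ≤ (2 * B + c) ^ 2 := by
    have hsum : ∑ i ∈ Finset.Icc 1 N, norm3 (e i) ^ 2
        ≤ ∑ i ∈ Finset.Icc 1 N, (2 * norm3 (et i) + c) ^ 2 :=
      Finset.sum_le_sum fun i hi =>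
        pow_le_pow_left₀ (norm3_nonneg _) (key i hi) 2
    have h1 : gip N e e ≤ gridh N * ∑ i ∈ Finset.Icc 1 N, (2 * norm3 (et i) + c) ^ 2 := by
      rw [hgip_e]
      exact mul_le_mul_of_nonneg_left hsum hpos.le
    rw [hexp] at h1
    have h2 : gridh N * (4 * (∑ i ∈ Finset.Icc 1 N, norm3 (et i) ^ 2)
        + 4 * c * (∑ i ∈ Finset.Icc 1 N, norm3 (et i)) + N * c ^ 2)
        = 4 * B ^ 2 + 4 * c * (gridh N * ∑ i ∈ Finset.Icc 1 N, norm3 (et i))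
          + (gridh N * N) * c ^ 2 := by
      rw [hB2]; ring
    rw [h2, hhN, one_mul] at h1
    nlinarith
  calc gnorm2 N e = Real.sqrt (gip N e e) := rfl
    _ ≤ Real.sqrt ((2 * B + c) ^ 2) := Real.sqrt_le_sqrt hmain
    _ = 2 * B + c := Real.sqrt_sq (by positivity)
    _ = 2 * gnorm2 N et + K * (gridh N) ^ 2 := by rw [hB_def, hc_def]
end
end

section
/- Fifth-order accuracy of the corrected ghost-point extrapolation: there is an absolute constant C > 0 with the following property. Let h > 0, let f : ℝ → ℝ be five times continuously differentiable on [−h/2, h/2] with f'(0) = 0 and |f⁽⁵⁾| ≤ M₁ there, and let φ : ℝ → ℝ be three times continuously differentiable on [−h/2, h/2] with φ'(0) = −(1/24)·f'''(0) and |φ'''| ≤ M₂ there. Set g = f + h²·φ. Then | g(−h/2) − g(h/2) | ≤ C·(M₁ + M₂)·h⁵. -/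
open Set Finset

/-- iterated derivative within a subset agrees with that on a superset for smooth functions. -/
lemma iterSubset {f : ℝ → ℝ} {s t : Set ℝ} {N : WithTop ℕ∞} {n : ℕ}
    (hf : ContDiffOn ℝ N f t) (hn : (n : WithTop ℕ∞) ≤ N) (hst : s ⊆ t)
    (hs : UniqueDiffOn ℝ s) (ht : UniqueDiffOn ℝ t) {x : ℝ} (hx : x ∈ s) :
    iteratedDerivWithin n f s x = iteratedDerivWithin n f t x := by
  have H := ((hf.ftaylorSeriesWithin ht).mono hst).eq_iteratedFDerivWithin_of_uniqueDiffOn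
    (m := n) hn hs hx
  simp only [iteratedDerivWithin_eq_iteratedFDerivWithin]
  rw [← H]
  rfl

lemma negMemIcc {r x : ℝ} (hx : x ∈ Icc (-r) r) : -x ∈ Icc (-r) r :=
  ⟨by linarith [hx.2], by linarith [hx.1]⟩

lemma derivWithinCompNeg {r : ℝ} (hr : 0 < r) {F : ℝ → ℝ} {x : ℝ}
    (hx : x ∈ Icc (-r) r) (hF : DifferentiableWithinAt ℝ F (Icc (-r) r) (-x)) :
    derivWithin (fun y => F (-y)) (Icc (-r) r) x = -derivWithin F (Icc (-r) r) (-x) := by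
  have h2 : HasDerivWithinAt (fun y : ℝ => -y) (-1 : ℝ) (Icc (-r) r) x :=
    (hasDerivAt_neg x).hasDerivWithinAt
  have h3 := hF.hasDerivWithinAt.comp (h := fun y : ℝ => -y) x h2
    (fun y hy => negMemIcc hy)
  have h4 := h3.derivWithin ((uniqueDiffOn_Icc (by linarith : -r < r)).uniqueDiffWithinAt hx)
  simpa [Function.comp_def, mul_comm] using h4

lemma iterCompNeg {r : ℝ} (hr : 0 < r) {f : ℝ → ℝ} {N : ℕ}
    (hf : ContDiffOn ℝ N f (Icc (-r) r)) :
    ∀ m : ℕ, m ≤ N → ∀ x ∈ Icc (-r) r,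
      iteratedDerivWithin m (fun y => f (-y)) (Icc (-r) r) x
        = (-1 : ℝ) ^ m * iteratedDerivWithin m f (Icc (-r) r) (-x) := by
  have hJ : UniqueDiffOn ℝ (Icc (-r) r) := uniqueDiffOn_Icc (by linarith)
  intro m
  induction m with
  | zero => intro _ x hx; simp
  | succ m IH =>
    intro hm x hx
    have hm' : m ≤ N := le_trans (Nat.le_succ m) hm
    have hFdiff : DifferentiableOn ℝ (iteratedDerivWithin m f (Icc (-r) r)) (Icc (-r) r) :=
      hf.differentiableOn_iteratedDerivWithin (by exact_mod_cast Nat.lt_of_lt_of_le m.lt_succ_self hm) hJ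
    rw [iteratedDerivWithin_succ]
    rw [derivWithin_congr (fun y hy => IH hm' y hy) (IH hm' x hx)]
    have hinner : DifferentiableWithinAt ℝ
        (fun y => iteratedDerivWithin m f (Icc (-r) r) (-y)) (Icc (-r) r) x := by
      have h2 : HasDerivWithinAt (fun y : ℝ => -y) (-1 : ℝ) (Icc (-r) r) x :=
        (hasDerivAt_neg x).hasDerivWithinAt
      exact ((hFdiff (-x) (negMemIcc hx)).hasDerivWithinAt.comp
        (h := fun y : ℝ => -y) x h2 (fun y hy => negMemIcc hy)).differentiableWithinAt
    rw [derivWithin_const_mul _ hinner]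
    rw [derivWithinCompNeg hr hx (hFdiff (-x) (negMemIcc hx))]
    rw [← iteratedDerivWithin_succ]
    ring

lemma taylorPlus {r M : ℝ} {n : ℕ} (hr : 0 < r) {f : ℝ → ℝ}
    (hf : ContDiffOn ℝ (n + 1 : ℕ) f (Icc (-r) r))
    (hM : ∀ y ∈ Icc (-r) r, |iteratedDerivWithin (n + 1) f (Icc (-r) r) y| ≤ M) :
    |f r - ∑ i ∈ Finset.range (n + 1),
        r ^ i / (Nat.factorial i : ℝ) * iteratedDerivWithin i f (Icc (-r) r) 0|
      ≤ M * r ^ (n + 1) / (Nat.factorial n : ℝ) := by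
  have hsub : Icc (0 : ℝ) r ⊆ Icc (-r) r := Icc_subset_Icc (by linarith) le_rfl
  have hu1 : UniqueDiffOn ℝ (Icc (0 : ℝ) r) := uniqueDiffOn_Icc hr
  have hu2 : UniqueDiffOn ℝ (Icc (-r) r) := uniqueDiffOn_Icc (by linarith)
  have hf' : ContDiffOn ℝ (n + 1) f (Icc (0 : ℝ) r) := by
    exact_mod_cast hf.mono hsub
  have key := taylor_mean_remainder_bound (a := 0) (b := r) (C := M) (n := n)
    (le_of_lt hr) hf' (right_mem_Icc.2 (le_of_lt hr)) (fun y hy => by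
      rw [Real.norm_eq_abs, iterSubset (n := n + 1) hf le_rfl hsub hu1 hu2 hy]
      exact hM y (hsub hy))
  rw [taylor_within_apply, Real.norm_eq_abs, sub_zero] at key
  have hsum : ∑ k ∈ Finset.range (n + 1),
      (((Nat.factorial k : ℝ))⁻¹ * r ^ k) • iteratedDerivWithin k f (Icc (0 : ℝ) r) 0
      = ∑ i ∈ Finset.range (n + 1),
        r ^ i / (Nat.factorial i : ℝ) * iteratedDerivWithin i f (Icc (-r) r) 0 := by
    refine Finset.sum_congr rfl (fun i hi => ?_)
    rw [iterSubset (n := i) hf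
      (by exact_mod_cast (Nat.le_of_lt_succ (Finset.mem_range.mp hi)).trans (Nat.le_succ n))
      hsub hu1 hu2 (left_mem_Icc.2 (le_of_lt hr)), smul_eq_mul]
    ring
  rw [hsum] at key
  exact key

lemma taylorMinus {r M : ℝ} {n : ℕ} (hr : 0 < r) {f : ℝ → ℝ}
    (hf : ContDiffOn ℝ (n + 1 : ℕ) f (Icc (-r) r))
    (hM : ∀ y ∈ Icc (-r) r, |iteratedDerivWithin (n + 1) f (Icc (-r) r) y| ≤ M) :
    |f (-r) - ∑ i ∈ Finset.range (n + 1),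
        (-1 : ℝ) ^ i * r ^ i / (Nat.factorial i : ℝ) * iteratedDerivWithin i f (Icc (-r) r) 0|
      ≤ M * r ^ (n + 1) / (Nat.factorial n : ℝ) := by
  have hmem : ∀ x ∈ Icc (-r) r, -x ∈ Icc (-r) r := fun x hx => negMemIcc hx
  have hg : ContDiffOn ℝ (n + 1 : ℕ) (fun y => f (-y)) (Icc (-r) r) := by
    exact hf.comp (contDiff_neg.contDiffOn) hmem
  have h0 : (0 : ℝ) ∈ Icc (-r) r := ⟨by linarith, by linarith⟩
  have hcn := iterCompNeg (N := n + 1) hr hf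
  have hMg : ∀ y ∈ Icc (-r) r,
      |iteratedDerivWithin (n + 1) (fun y => f (-y)) (Icc (-r) r) y| ≤ M := by
    intro y hy
    rw [hcn (n + 1) le_rfl y hy, abs_mul, abs_pow, abs_neg, abs_one, one_pow, one_mul]
    exact hM (-y) (negMemIcc hy)
  have key := taylorPlus hr hg hMg
  have hsum : ∑ i ∈ Finset.range (n + 1),
      r ^ i / (Nat.factorial i : ℝ) * iteratedDerivWithin i (fun y => f (-y)) (Icc (-r) r) 0
      = ∑ i ∈ Finset.range (n + 1),
        (-1 : ℝ) ^ i * r ^ i / (Nat.factorial i : ℝ) * iteratedDerivWithin i f (Icc (-r) r) 0 := by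
    refine Finset.sum_congr rfl (fun i hi => ?_)
    rw [hcn i (by exact (Nat.le_of_lt_succ (Finset.mem_range.mp hi)).trans (Nat.le_succ n)) 0 h0]
    rw [neg_zero]
    ring
  rw [hsum] at key
  simpa using key


set_option maxHeartbeats 1000000


/-- fifth-order accuracy of the corrected ghost-point extrapolation: with
`g = f + h²·φ`, where `f` is C⁵ with `f'(0) = 0`, `|f⁽⁵⁾| ≤ M₁`, and `φ` is C³ with
`φ'(0) = −(1/24)·f'''(0)`, `|φ'''| ≤ M₂` on `[−h/2, h/2]`, one has
`|g(−h/2) − g(h/2)| ≤ C·(M₁ + M₂)·h⁵` for an absolute constant `C`. -/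
theorem corrected_ghost_point_fifth_order :
    ∃ C > (0:ℝ), ∀ h : ℝ, 0 < h → ∀ f φ : ℝ → ℝ, ∀ M₁ M₂ : ℝ,
      ContDiffOn ℝ 5 f (Set.Icc (-(h / 2)) (h / 2)) →
      derivWithin f (Set.Icc (-(h / 2)) (h / 2)) 0 = 0 →
      (∀ s ∈ Set.Icc (-(h / 2)) (h / 2),
        |iteratedDerivWithin 5 f (Set.Icc (-(h / 2)) (h / 2)) s| ≤ M₁) →
      ContDiffOn ℝ 3 φ (Set.Icc (-(h / 2)) (h / 2)) →
      derivWithin φ (Set.Icc (-(h / 2)) (h / 2)) 0 =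
        -(1 / 24) * iteratedDerivWithin 3 f (Set.Icc (-(h / 2)) (h / 2)) 0 →
      (∀ s ∈ Set.Icc (-(h / 2)) (h / 2),
        |iteratedDerivWithin 3 φ (Set.Icc (-(h / 2)) (h / 2)) s| ≤ M₂) →
      |(f (-(h / 2)) + h ^ 2 * φ (-(h / 2))) - (f (h / 2) + h ^ 2 * φ (h / 2))|
        ≤ C * (M₁ + M₂) * h ^ 5 := by
  refine ⟨1, one_pos, ?_⟩
  intro h hh f φ M₁ M₂ hf hf1 hM1 hφ hφ1 hM2
  set J : Set ℝ := Set.Icc (-(h / 2)) (h / 2) with hJdef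
  have hr : 0 < h / 2 := by linarith
  have h0 : (0 : ℝ) ∈ J := ⟨by linarith, by linarith⟩
  have hu : UniqueDiffOn ℝ J := uniqueDiffOn_Icc (by linarith)
  have hf4 : ContDiffOn ℝ ((4 : ℕ) + 1 : ℕ) f J := by exact_mod_cast hf
  have hφ2 : ContDiffOn ℝ ((2 : ℕ) + 1 : ℕ) φ J := by exact_mod_cast hφ
  have hM1' : ∀ y ∈ J, |iteratedDerivWithin (4 + 1) f J y| ≤ M₁ := by
    intro y hy; exact hM1 y hy
  have hM2' : ∀ y ∈ J, |iteratedDerivWithin (2 + 1) φ J y| ≤ M₂ := by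
    intro y hy; exact hM2 y hy
  set d : ℕ → ℝ := fun i => iteratedDerivWithin i f J 0 with hd
  set e : ℕ → ℝ := fun i => iteratedDerivWithin i φ J 0 with he
  have hd1 : d 1 = 0 := by
    rw [hd]; simp only; rw [iteratedDerivWithin_one]; exact hf1
  have he1 : e 1 = -(1 / 24) * d 3 := by
    rw [he, hd]; simp only; rw [iteratedDerivWithin_one]; exact hφ1
  have Fp := taylorPlus hr hf4 hM1'
  have Fm := taylorMinus hr hf4 hM1'
  have Gp := taylorPlus hr hφ2 hM2'
  have Gm := taylorMinus hr hφ2 hM2'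
  have hSp : ∑ i ∈ Finset.range (4 + 1), (h / 2) ^ i / (Nat.factorial i : ℝ) * iteratedDerivWithin i f J 0
      = d 0 + (h / 2) * d 1 + (h / 2) ^ 2 / 2 * d 2 + (h / 2) ^ 3 / 6 * d 3
        + (h / 2) ^ 4 / 24 * d 4 := by
    rw [hd]; simp [Finset.sum_range_succ, Nat.factorial]; try ring
  have hSm : ∑ i ∈ Finset.range (4 + 1),
      (-1 : ℝ) ^ i * (h / 2) ^ i / (Nat.factorial i : ℝ) * iteratedDerivWithin i f J 0
      = d 0 - (h / 2) * d 1 + (h / 2) ^ 2 / 2 * d 2 - (h / 2) ^ 3 / 6 * d 3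
        + (h / 2) ^ 4 / 24 * d 4 := by
    rw [hd]; simp [Finset.sum_range_succ, Nat.factorial]; try ring
  have hTp : ∑ i ∈ Finset.range (2 + 1), (h / 2) ^ i / (Nat.factorial i : ℝ) * iteratedDerivWithin i φ J 0
      = e 0 + (h / 2) * e 1 + (h / 2) ^ 2 / 2 * e 2 := by
    rw [he]; simp [Finset.sum_range_succ, Nat.factorial]; try ring
  have hTm : ∑ i ∈ Finset.range (2 + 1),
      (-1 : ℝ) ^ i * (h / 2) ^ i / (Nat.factorial i : ℝ) * iteratedDerivWithin i φ J 0
      = e 0 - (h / 2) * e 1 + (h / 2) ^ 2 / 2 * e 2 := by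
    rw [he]; simp [Finset.sum_range_succ, Nat.factorial]; try ring
  rw [hSp] at Fp
  rw [hSm] at Fm
  rw [hTp] at Gp
  rw [hTm] at Gm
  norm_num [Nat.factorial] at Fp Fm Gp Gm
  set Sp : ℝ := d 0 + (h / 2) * d 1 + (h / 2) ^ 2 / 2 * d 2 + (h / 2) ^ 3 / 6 * d 3
        + (h / 2) ^ 4 / 24 * d 4 with hSp'
  set Sm : ℝ := d 0 - (h / 2) * d 1 + (h / 2) ^ 2 / 2 * d 2 - (h / 2) ^ 3 / 6 * d 3
        + (h / 2) ^ 4 / 24 * d 4 with hSm'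
  set Tp : ℝ := e 0 + (h / 2) * e 1 + (h / 2) ^ 2 / 2 * e 2 with hTp'
  set Tm : ℝ := e 0 - (h / 2) * e 1 + (h / 2) ^ 2 / 2 * e 2 with hTm'
  have hM1nn : 0 ≤ M₁ := le_trans (abs_nonneg _) (hM1 0 h0)
  have hM2nn : 0 ≤ M₂ := le_trans (abs_nonneg _) (hM2 0 h0)
  have key : (f (-(h / 2)) + h ^ 2 * φ (-(h / 2))) - (f (h / 2) + h ^ 2 * φ (h / 2))
      = ((f (-(h / 2)) - Sm) - (f (h / 2) - Sp))
        + (h ^ 2 * (φ (-(h / 2)) - Tm) - h ^ 2 * (φ (h / 2) - Tp)) := by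
    rw [hSp', hSm', hTp', hTm']
    linear_combination (-h) * hd1 + (-h ^ 3) * he1
  rw [key]
  have habs : |((f (-(h / 2)) - Sm) - (f (h / 2) - Sp))
        + (h ^ 2 * (φ (-(h / 2)) - Tm) - h ^ 2 * (φ (h / 2) - Tp))|
      ≤ |f (-(h / 2)) - Sm| + |f (h / 2) - Sp|
        + h ^ 2 * |φ (-(h / 2)) - Tm| + h ^ 2 * |φ (h / 2) - Tp| := by
    calc _ ≤ |(f (-(h / 2)) - Sm) - (f (h / 2) - Sp)|
            + |h ^ 2 * (φ (-(h / 2)) - Tm) - h ^ 2 * (φ (h / 2) - Tp)| := abs_add_le _ _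
      _ ≤ (|f (-(h / 2)) - Sm| + |f (h / 2) - Sp|)
            + (|h ^ 2 * (φ (-(h / 2)) - Tm)| + |h ^ 2 * (φ (h / 2) - Tp)|) :=
        add_le_add (abs_sub _ _) (abs_sub _ _)
      _ = _ := by rw [abs_mul, abs_mul, abs_of_nonneg (sq_nonneg h)]; ring
  refine le_trans habs ?_
  have e1 : |f (-(h / 2)) - Sm| ≤ M₁ * (h / 2) ^ 5 / 24 := Fm
  have e2 : |f (h / 2) - Sp| ≤ M₁ * (h / 2) ^ 5 / 24 := Fp
  have e3 : |φ (-(h / 2)) - Tm| ≤ M₂ * (h / 2) ^ 3 / 2 := Gm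
  have e4 : |φ (h / 2) - Tp| ≤ M₂ * (h / 2) ^ 3 / 2 := Gp
  have hh2 : (0:ℝ) ≤ h ^ 2 := sq_nonneg h
  nlinarith [mul_le_mul_of_nonneg_left e3 hh2, mul_le_mul_of_nonneg_left e4 hh2,
    mul_nonneg hM1nn (pow_nonneg hh.le 5), mul_nonneg hM2nn (pow_nonneg hh.le 5)]
end

section
/- Second-order consistency of the discrete Laplacian at the boundary cell with the corrected ghost value: there is an absolute constant C > 0 with the following property. Let 0 < h ≤ 1, let f : ℝ → ℝ be five times continuously differentiable on [−h/2, 3h/2] with f'(0) = 0 and with |f⁗| ≤ M₁ and |f⁽⁵⁾| ≤ M₁ on [−h/2, 3h/2], and let φ : ℝ → ℝ be three times continuously differentiable on [−h/2, 3h/2] with φ'(0) = −(1/24)·f'''(0) and with |φ''| ≤ M₂ and |φ'''| ≤ M₂ there. Set g = f + h²·φ and define the boundary-cell discrete Laplacian using the ghost value g(h/2) in place of g(−h/2): L := ( g(3h/2) − 2·g(h/2) + g(h/2) )/h². Then | L − f''(h/2) | ≤ C·(M₁ + M₂)·h². -/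
lemma iterDeriv_subset' {f : ℝ → ℝ} {s t : Set ℝ} (hst : s ⊆ t)
    (hs : UniqueDiffOn ℝ s) (ht : UniqueDiffOn ℝ t) {n : ℕ} (hf : ContDiffOn ℝ n f t)
    {k : ℕ} (hk : k ≤ n) :
    ∀ x ∈ s, iteratedDerivWithin k f s x = iteratedDerivWithin k f t x := by
  induction k with
  | zero => simp
  | succ k ih =>
    intro x hx
    have hk' : k ≤ n := (Nat.lt_of_succ_le hk).le
    have hd : DifferentiableWithinAt ℝ (iteratedDerivWithin k f t) t x :=
      (hf.differentiableOn_iteratedDerivWithin (by exact_mod_cast Nat.lt_of_succ_le hk) ht)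
        x (hst hx)
    rw [iteratedDerivWithin_succ, iteratedDerivWithin_succ,
      derivWithin_congr (fun y hy => ih hk' y hy) (ih hk' x hx)]
    exact (hd.hasDerivWithinAt.mono hst).derivWithin (hs x hx)

lemma taylor_bound' {g : ℝ → ℝ} {I : Set ℝ} {a x M : ℝ} (n : ℕ)
    (hI : UniqueDiffOn ℝ I) (hax : a < x) (hsub : Set.Icc a x ⊆ I)
    (hg : ContDiffOn ℝ (n + 1 : ℕ) g I)
    (hM : ∀ y ∈ Set.Icc a x, |iteratedDerivWithin (n + 1) g I y| ≤ M) :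
    |g x - ∑ k ∈ Finset.range (n + 1),
        (x - a) ^ k / (k.factorial : ℝ) * iteratedDerivWithin k g I a|
      ≤ M * (x - a) ^ (n + 1) / (n.factorial : ℝ) := by
  have hu : UniqueDiffOn ℝ (Set.Icc a x) := uniqueDiffOn_Icc hax
  have hconv : ∀ k : ℕ, k ≤ n + 1 → ∀ y ∈ Set.Icc a x,
      iteratedDerivWithin k g (Set.Icc a x) y = iteratedDerivWithin k g I y :=
    fun k hk => iterDeriv_subset' hsub hu hI hg hk
  have hbd := taylor_mean_remainder_bound hax.le (hg.mono hsub)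
      (Set.right_mem_Icc.mpr hax.le)
      (fun y hy => by
        rw [Real.norm_eq_abs, hconv (n + 1) le_rfl y hy]; exact hM y hy)
  rw [Real.norm_eq_abs, taylor_within_apply] at hbd
  have hsum : ∑ k ∈ Finset.range (n + 1),
        (((k.factorial : ℝ))⁻¹ * (x - a) ^ k) • iteratedDerivWithin k g (Set.Icc a x) a
      = ∑ k ∈ Finset.range (n + 1),
        (x - a) ^ k / (k.factorial : ℝ) * iteratedDerivWithin k g I a := by
    refine Finset.sum_congr rfl fun k hk => ?_
    rw [smul_eq_mul, hconv k (Finset.mem_range.mp hk).le a (Set.left_mem_Icc.mpr hax.le)]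
    ring
  rwa [hsum] at hbd

/-- second-order consistency of the boundary-cell discrete Laplacian with the
corrected ghost value: with `g = f + h²·φ` as in the corrected profile and
`L = (g(3h/2) − 2g(h/2) + g(h/2))/h²` (the ghost value `g(−h/2)` replaced by `g(h/2)`),
one has `|L − f''(h/2)| ≤ C·(M₁ + M₂)·h²` for an absolute constant `C`. -/
theorem boundary_cell_laplacian_consistency :
    ∃ C > (0:ℝ), ∀ h : ℝ, 0 < h → h ≤ 1 → ∀ f φ : ℝ → ℝ, ∀ M₁ M₂ : ℝ,
      ContDiffOn ℝ 5 f (Set.Icc (-(h / 2)) (3 * h / 2)) →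
      derivWithin f (Set.Icc (-(h / 2)) (3 * h / 2)) 0 = 0 →
      (∀ s ∈ Set.Icc (-(h / 2)) (3 * h / 2),
        |iteratedDerivWithin 4 f (Set.Icc (-(h / 2)) (3 * h / 2)) s| ≤ M₁ ∧
        |iteratedDerivWithin 5 f (Set.Icc (-(h / 2)) (3 * h / 2)) s| ≤ M₁) →
      ContDiffOn ℝ 3 φ (Set.Icc (-(h / 2)) (3 * h / 2)) →
      derivWithin φ (Set.Icc (-(h / 2)) (3 * h / 2)) 0 =
        -(1 / 24) * iteratedDerivWithin 3 f (Set.Icc (-(h / 2)) (3 * h / 2)) 0 →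
      (∀ s ∈ Set.Icc (-(h / 2)) (3 * h / 2),
        |iteratedDerivWithin 2 φ (Set.Icc (-(h / 2)) (3 * h / 2)) s| ≤ M₂ ∧
        |iteratedDerivWithin 3 φ (Set.Icc (-(h / 2)) (3 * h / 2)) s| ≤ M₂) →
      |((f (3 * h / 2) + h ^ 2 * φ (3 * h / 2)) - 2 * (f (h / 2) + h ^ 2 * φ (h / 2))
            + (f (h / 2) + h ^ 2 * φ (h / 2))) / h ^ 2
          - iteratedDerivWithin 2 f (Set.Icc (-(h / 2)) (3 * h / 2)) (h / 2)|
        ≤ C * (M₁ + M₂) * h ^ 2 := by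
  refine ⟨2, by norm_num, ?_⟩
  intro h hh hh1 f φ M₁ M₂ hf hf0 hfb hφ hφ0 hφb
  set I := Set.Icc (-(h / 2)) (3 * h / 2) with hIdef
  have hI : UniqueDiffOn ℝ I := uniqueDiffOn_Icc (by linarith)
  have h0I : (0:ℝ) ∈ I := ⟨by linarith, by linarith⟩
  have hcI : h / 2 ∈ I := ⟨by linarith, by linarith⟩
  have hsub1 : Set.Icc (h / 2) (3 * h / 2) ⊆ I := Set.Icc_subset_Icc (by linarith) le_rfl
  have hsub2 : Set.Icc (0:ℝ) (h / 2) ⊆ I := Set.Icc_subset_Icc (by linarith) (by linarith)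
  set Df : (ℝ → ℝ) → (ℝ → ℝ) := fun v => derivWithin v I with hDf
  -- shift lemma
  have shift : ∀ (u : ℝ → ℝ) (m k : ℕ) (x : ℝ), x ∈ I →
      iteratedDerivWithin k (Df^[m] u) I x = iteratedDerivWithin (k + m) u I x := by
    intro u m k x hx
    rw [iteratedDerivWithin_eq_iterate, iteratedDerivWithin_eq_iterate,
      ← Function.iterate_add_apply]
  have eval0 : ∀ (u : ℝ → ℝ) (m : ℕ) (x : ℝ), x ∈ I →
      (Df^[m] u) x = iteratedDerivWithin m u I x := by
    intro u m x hx
    have := shift u m 0 x hx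
    simpa using this
  -- smoothness
  have hfN : ContDiffOn ℝ (5:ℕ) f I := by exact_mod_cast hf
  have hφN : ContDiffOn ℝ (3:ℕ) φ I := by exact_mod_cast hφ
  have hg1 : ContDiffOn ℝ (4:ℕ) (Df^[1] f) I := by
    rw [Function.iterate_one]; exact hfN.derivWithin hI (by norm_num)
  have hg2 : ContDiffOn ℝ (3:ℕ) (Df^[2] f) I := by
    rw [show (2:ℕ) = 1 + 1 from rfl, Function.iterate_add_apply, Function.iterate_one]
    exact hg1.derivWithin hI (by norm_num)
  have hg3 : ContDiffOn ℝ (2:ℕ) (Df^[3] f) I := by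
    rw [show (3:ℕ) = 1 + 2 from rfl, Function.iterate_add_apply, Function.iterate_one]
    exact hg2.derivWithin hI (by norm_num)
  have hp1 : ContDiffOn ℝ (2:ℕ) (Df^[1] φ) I := by
    rw [Function.iterate_one]; exact hφN.derivWithin hI (by norm_num)
  -- nonnegativity of M₁ M₂
  have hM₁ : 0 ≤ M₁ := le_trans (abs_nonneg _) (hfb 0 h0I).1
  have hM₂ : 0 ≤ M₂ := le_trans (abs_nonneg _) (hφb 0 h0I).1
  -- Taylor estimates
  have hc : (0:ℝ) < h / 2 := by linarith
  have hcb : h / 2 < 3 * h / 2 := by linarith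
  -- A : f at h/2 up to order 3
  have hA := taylor_bound' (g := f) 3 hI hcb hsub1
      (hfN.of_le (by exact_mod_cast (by norm_num : (4:ℕ) ≤ 5)))
      (fun y hy => (hfb y (hsub1 hy)).1)
  -- B : f' at 0 up to order 2
  have hB := taylor_bound' (g := Df^[1] f) 2 hI hc hsub2
      (hg1.of_le (by exact_mod_cast (by norm_num : (3:ℕ) ≤ 4)))
      (fun y hy => by rw [shift f 1 3 y (hsub2 hy)]; exact (hfb y (hsub2 hy)).1)
  -- C : f'' at 0 up to order 1
  have hC := taylor_bound' (g := Df^[2] f) 1 hI hc hsub2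
      (hg2.of_le (by exact_mod_cast (by norm_num : (2:ℕ) ≤ 3)))
      (fun y hy => by rw [shift f 2 2 y (hsub2 hy)]; exact (hfb y (hsub2 hy)).1)
  -- D : f''' at 0 up to order 0
  have hD := taylor_bound' (g := Df^[3] f) 0 hI hc hsub2
      (hg3.of_le (by exact_mod_cast (by norm_num : (1:ℕ) ≤ 2)))
      (fun y hy => by rw [shift f 3 1 y (hsub2 hy)]; exact (hfb y (hsub2 hy)).1)
  -- E : φ at h/2 up to order 1
  have hE := taylor_bound' (g := φ) 1 hI hcb hsub1
      (hφN.of_le (by exact_mod_cast (by norm_num : (2:ℕ) ≤ 3)))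
      (fun y hy => (hφb y (hsub1 hy)).1)
  -- F : φ' at 0 up to order 0
  have hF := taylor_bound' (g := Df^[1] φ) 0 hI hc hsub2
      (hp1.of_le (by exact_mod_cast (by norm_num : (1:ℕ) ≤ 2)))
      (fun y hy => by rw [shift (φ) 1 1 y (hsub2 hy)]; exact (hφb y (hsub2 hy)).1)
  -- expand the Taylor sums
  simp only [Finset.sum_range_succ, Finset.sum_range_zero] at hA hB hC hD hE hF
  -- convert iterated derivatives of derivatives back to iterated derivatives of f, φ
  rw [eval0 f 1 _ hcI, shift f 1 0 0 h0I, shift f 1 1 0 h0I, shift f 1 2 0 h0I] at hB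
  rw [eval0 f 2 _ hcI, shift f 2 0 0 h0I, shift f 2 1 0 h0I] at hC
  rw [eval0 f 3 _ hcI, shift f 3 0 0 h0I] at hD
  rw [eval0 (φ) 1 _ hcI, shift (φ) 1 0 0 h0I] at hF
  norm_num [Nat.factorial] at hA hB hC hD hE hF
  rw [hf0] at hB
  rw [hφ0] at hF
  have h2 : (0:ℝ) < h ^ 2 := by positivity
  rw [div_sub' (ne_of_gt h2), abs_div, abs_of_pos h2, div_le_iff₀ h2, abs_le]
  obtain ⟨hA1, hA2⟩ := abs_le.mp hA
  obtain ⟨hB1, hB2⟩ := abs_le.mp hB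
  obtain ⟨hC1, hC2⟩ := abs_le.mp hC
  obtain ⟨hD1, hD2⟩ := abs_le.mp hD
  obtain ⟨hE1, hE2⟩ := abs_le.mp hE
  obtain ⟨hF1, hF2⟩ := abs_le.mp hF
  have p1 : (0:ℝ) ≤ h := hh.le
  have p2 : (0:ℝ) ≤ h ^ 2 := h2.le
  have p3 : (0:ℝ) ≤ h ^ 3 := by positivity
  have q1 : (0:ℝ) ≤ M₁ * h ^ 4 := by positivity
  have q2 : (0:ℝ) ≤ M₂ * h ^ 4 := by positivity
  constructor <;>
    linarith [mul_le_mul_of_nonneg_left hB1 p1, mul_le_mul_of_nonneg_left hB2 p1,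
      mul_le_mul_of_nonneg_left hC1 p2, mul_le_mul_of_nonneg_left hC2 p2,
      mul_le_mul_of_nonneg_left hD1 p3, mul_le_mul_of_nonneg_left hD2 p3,
      mul_le_mul_of_nonneg_left hE1 p2, mul_le_mul_of_nonneg_left hE2 p2,
      mul_le_mul_of_nonneg_left hF1 p3, mul_le_mul_of_nonneg_left hF2 p3,
      hA1, hA2, q1, q2]
end
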